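/- Let r > 0, p ≥ 1, 0 < ε < r, m ∈ ℕ, let E = ℝ^m with the Euclidean inner product, K and E₁ finite-dimensional real inner product spaces, T : E → K and A : E → E₁ linear maps, g ∈ K, f, q ∈ E₁, u ∈ E, γ > 0, and let B = p(r−ε)^{p−1}/(2ε) + 3((r−ε)^p − r^p)/(4ε²). If ω > γ|B|, then the function v ↦ J_{ω,u}(v,q) := ‖Tv − g‖² + γ ∑_{i=1}^m W_r^{p,ε}(v_i) + ω‖v − u‖² + (1/2)‖Av − (f+q)‖² is ν-strongly convex with ν = 2(ω − γ|B|). -/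

import Mathlib

/-- The smoothed truncated power potential `W_r^{p,ε}`. -/
noncomputable def Wpot (r p ε t : ℝ) : ℝ :=
  if |t| ≤ r - ε then |t| ^ p
  else if |t| ≤ r + ε then
    (p * (r - ε) ^ (p - 1) / (12 * ε ^ 2) +
        (p * (r - ε) ^ (p - 1) / (2 * ε) +
          3 * ((r - ε) ^ p - r ^ p) / (4 * ε ^ 2)) / (3 * ε)) *
      (|t| - (r + ε)) ^ 3 +
    (p * (r - ε) ^ (p - 1) / (2 * ε) + 3 * ((r - ε) ^ p - r ^ p) / (4 * ε ^ 2)) *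
      (|t| - (r + ε)) ^ 2 + r ^ p
  else r ^ p

namespace Statement13Aux

open Set Real

/-- The quadratic coefficient `B` in the smoothing construction. -/
noncomputable def Bc (r p ε : ℝ) : ℝ :=
  p * (r - ε) ^ (p - 1) / (2 * ε) + 3 * ((r - ε) ^ p - r ^ p) / (4 * ε ^ 2)

/-- The cubic coefficient `A₀` in the smoothing construction. -/
noncomputable def Ac (r p ε : ℝ) : ℝ :=
  p * (r - ε) ^ (p - 1) / (12 * ε ^ 2) + Bc r p ε / (3 * ε)

/-- The one-dimensional "strongly convexified" potential, as a function of `s = |t|`. -/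
noncomputable def wfun (r p ε : ℝ) : ℝ → ℝ := fun s =>
  (if s ≤ r - ε then s ^ p
   else if s ≤ r + ε then
     Ac r p ε * (s - (r + ε)) ^ 3 + Bc r p ε * (s - (r + ε)) ^ 2 + r ^ p
   else r ^ p) - Bc r p ε * s ^ 2

/-- The derivative of `wfun` on `(0, ∞)`. -/
noncomputable def Dfun (r p ε : ℝ) : ℝ → ℝ := fun s =>
  if s ≤ r - ε then p * s ^ (p - 1) - 2 * Bc r p ε * s
  else if s ≤ r + ε then 3 * Ac r p ε * (s - (r + ε)) ^ 2 - 2 * Bc r p ε * (r + ε)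
  else -(2 * Bc r p ε * s)

lemma hBc_id {r p ε : ℝ} (hε : ε ≠ 0) :
    Bc r p ε * (4 * ε ^ 2) = 2 * ε * (p * (r - ε) ^ (p - 1)) + 3 * ((r - ε) ^ p - r ^ p) := by
  unfold Bc; field_simp; ring

lemma hAc_id {r p ε : ℝ} (hε : ε ≠ 0) :
    Ac r p ε * (12 * ε ^ 2) = p * (r - ε) ^ (p - 1) + 4 * ε * Bc r p ε := by
  unfold Ac Bc; field_simp; ring

lemma hkey {r p ε : ℝ} (hr : 0 < r) (hp : 1 ≤ p) (hε0 : 0 < ε) (hεr : ε < r) :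
    ε * (p * (r - ε) ^ (p - 1)) ≤ r ^ p - (r - ε) ^ p := by
  have ha : 0 < r - ε := by linarith
  have hcont : ContinuousOn (fun x : ℝ => x ^ p) (Icc (r - ε) r) := by
    intro x hx
    exact (Real.continuousAt_rpow_const x p
      (Or.inl (by nlinarith [hx.1] : x ≠ 0))).continuousWithinAt
  have hder : ∀ x ∈ Ioo (r - ε) r, HasDerivAt (fun x : ℝ => x ^ p) (p * x ^ (p - 1)) x :=
    fun x _ => Real.hasDerivAt_rpow_const (Or.inr hp)
  obtain ⟨c, hc, hceq⟩ := exists_hasDerivAt_eq_slope (fun x : ℝ => x ^ p)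
    (fun x => p * x ^ (p - 1)) (by linarith : r - ε < r) hcont hder
  have h1 : (r - ε) ^ (p - 1) ≤ c ^ (p - 1) :=
    Real.rpow_le_rpow ha.le hc.1.le (by linarith)
  have h2 : p * (r - ε) ^ (p - 1) ≤ p * c ^ (p - 1) := by nlinarith
  have h3 : r - (r - ε) = ε := by ring
  rw [h3] at hceq
  have : p * c ^ (p - 1) * ε = r ^ p - (r - ε) ^ p := by
    field_simp at hceq; linarith [hceq]
  nlinarith

lemma hPpos {r p ε : ℝ} (hr : 0 < r) (hp : 1 ≤ p) (hε0 : 0 < ε) (hεr : ε < r) :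
    0 < p * (r - ε) ^ (p - 1) := by
  have : (0:ℝ) < (r - ε) ^ (p - 1) := Real.rpow_pos_of_pos (by linarith) _
  nlinarith

lemma hP4B {r p ε : ℝ} (hr : 0 < r) (hp : 1 ≤ p) (hε0 : 0 < ε) (hεr : ε < r) :
    p * (r - ε) ^ (p - 1) + 4 * ε * Bc r p ε ≤ 0 := by
  have hk := hkey hr hp hε0 hεr
  have hb := hBc_id (r := r) (p := p) hε0.ne'
  nlinarith

lemma hBneg {r p ε : ℝ} (hr : 0 < r) (hp : 1 ≤ p) (hε0 : 0 < ε) (hεr : ε < r) :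
    Bc r p ε < 0 := by
  have h1 := hP4B hr hp hε0 hεr
  have h2 := hPpos hr hp hε0 hεr
  nlinarith

lemma hAneg {r p ε : ℝ} (hr : 0 < r) (hp : 1 ≤ p) (hε0 : 0 < ε) (hεr : ε < r) :
    Ac r p ε ≤ 0 := by
  have h1 := hP4B hr hp hε0 hεr
  have h2 := hAc_id (r := r) (p := p) hε0.ne'
  nlinarith [pow_pos hε0 2]

lemma cubic_left {r p ε : ℝ} (hp : 1 ≤ p) (hε0 : 0 < ε) (hεr : ε < r) :
    Ac r p ε * ((r - ε) - (r + ε)) ^ 3 + Bc r p ε * ((r - ε) - (r + ε)) ^ 2 + r ^ p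
      = (r - ε) ^ p := by
  have hA := hAc_id (r := r) (p := p) hε0.ne'
  have hB := hBc_id (r := r) (p := p) hε0.ne'
  have h1 : ((r - ε) - (r + ε)) = -(2 * ε) := by ring
  rw [h1]
  nlinarith [hA, hB]

lemma w_eq_pow {r p ε : ℝ} (x : ℝ) (hx : x ≤ r - ε) :
    wfun r p ε x = x ^ p - Bc r p ε * x ^ 2 := by
  simp [wfun, hx]

lemma w_eq_cubic {r p ε : ℝ} (hp : 1 ≤ p) (hε0 : 0 < ε) (hεr : ε < r) (x : ℝ)
    (hx : x ∈ Icc (r - ε) (r + ε)) :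
    wfun r p ε x =
      Ac r p ε * (x - (r + ε)) ^ 3 + Bc r p ε * (x - (r + ε)) ^ 2 + r ^ p
        - Bc r p ε * x ^ 2 := by
  rcases eq_or_lt_of_le hx.1 with h | h
  · rw [wfun]
    rw [if_pos (le_of_eq h.symm), ← h, ← cubic_left hp hε0 hεr]
  · rw [wfun, if_neg (by linarith), if_pos hx.2]

lemma w_eq_const {r p ε : ℝ} (hε0 : 0 < ε) (hεr : ε < r) (x : ℝ) (hx : r + ε ≤ x) :
    wfun r p ε x = r ^ p - Bc r p ε * x ^ 2 := by
  rcases eq_or_lt_of_le hx with h | h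
  · rw [wfun, if_neg (by linarith), if_pos (le_of_eq h.symm), ← h]
    ring_nf
  · rw [wfun, if_neg (by linarith), if_neg (by linarith)]

lemma hasDeriv_powpiece {r p ε : ℝ} {x : ℝ} (hx : x ≠ 0 ∨ 1 ≤ p) :
    HasDerivAt (fun y : ℝ => y ^ p - Bc r p ε * y ^ 2)
      (p * x ^ (p - 1) - 2 * Bc r p ε * x) x := by
  have h1 := Real.hasDerivAt_rpow_const (x := x) (p := p) hx
  have h2 : HasDerivAt (fun y : ℝ => Bc r p ε * y ^ 2) (Bc r p ε * (2 * x)) x := by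
    simpa using (hasDerivAt_pow 2 x).const_mul (Bc r p ε)
  exact (h1.fun_sub h2).congr_deriv (by ring)

lemma hasDeriv_cubicpiece {r p ε : ℝ} (x : ℝ) :
    HasDerivAt (fun y : ℝ =>
        Ac r p ε * (y - (r + ε)) ^ 3 + Bc r p ε * (y - (r + ε)) ^ 2 + r ^ p
          - Bc r p ε * y ^ 2)
      (3 * Ac r p ε * (x - (r + ε)) ^ 2 - 2 * Bc r p ε * (r + ε)) x := by
  have hb : HasDerivAt (fun y : ℝ => y - (r + ε)) 1 x := (hasDerivAt_id x).sub_const _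
  have h1 : HasDerivAt (fun y : ℝ => (y - (r + ε)) ^ 3) (3 * (x - (r + ε)) ^ 2) x := by
    simpa using hb.fun_pow 3
  have h2 : HasDerivAt (fun y : ℝ => (y - (r + ε)) ^ 2) (2 * (x - (r + ε))) x := by
    simpa using hb.fun_pow 2
  have h3 : HasDerivAt (fun y : ℝ => y ^ 2) (2 * x) x := by simpa using hasDerivAt_pow 2 x
  have := (((h1.const_mul (Ac r p ε)).fun_add (h2.const_mul (Bc r p ε))).add_const
      (r ^ p)).fun_sub (h3.const_mul (Bc r p ε))
  exact this.congr_deriv (by ring)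

lemma hasDeriv_constpiece {r p ε : ℝ} (x : ℝ) :
    HasDerivAt (fun y : ℝ => r ^ p - Bc r p ε * y ^ 2) (-(2 * Bc r p ε * x)) x := by
  have h3 : HasDerivAt (fun y : ℝ => y ^ 2) (2 * x) x := by simpa using hasDerivAt_pow 2 x
  have := (hasDerivAt_const x (r ^ p)).fun_sub (h3.const_mul (Bc r p ε))
  exact this.congr_deriv (by ring)

lemma w_hasDeriv {r p ε : ℝ} (hr : 0 < r) (hp : 1 ≤ p) (hε0 : 0 < ε) (hεr : ε < r)
    {s : ℝ} (hs : 0 < s) : HasDerivAt (wfun r p ε) (Dfun r p ε s) s := by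
  rcases lt_trichotomy s (r - ε) with h1 | h1 | h1
  · have hev : wfun r p ε =ᶠ[nhds s] fun y => y ^ p - Bc r p ε * y ^ 2 := by
      filter_upwards [Iio_mem_nhds h1] with y hy
      exact w_eq_pow y (le_of_lt hy)
    rw [Dfun, if_pos h1.le]
    exact (hasDeriv_powpiece (Or.inl hs.ne')).congr_of_eventuallyEq hev
  · subst h1
    have hd2 : 3 * Ac r p ε * ((r - ε) - (r + ε)) ^ 2 - 2 * Bc r p ε * (r + ε)
        = p * (r - ε) ^ (p - 1) - 2 * Bc r p ε * (r - ε) := by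
      linear_combination hAc_id (r := r) (p := p) hε0.ne'
    have hleft : HasDerivWithinAt (wfun r p ε)
        (p * (r - ε) ^ (p - 1) - 2 * Bc r p ε * (r - ε)) (Iic (r - ε)) (r - ε) := by
      refine ((hasDeriv_powpiece (Or.inl hs.ne')).hasDerivWithinAt).congr ?_ ?_
      · exact fun y hy => w_eq_pow y hy
      · exact w_eq_pow _ le_rfl
    have hright : HasDerivWithinAt (wfun r p ε)
        (p * (r - ε) ^ (p - 1) - 2 * Bc r p ε * (r - ε)) (Icc (r - ε) (r + ε)) (r - ε) := by
      rw [← hd2]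
      refine ((hasDeriv_cubicpiece (r - ε)).hasDerivWithinAt).congr ?_ ?_
      · exact fun y hy => w_eq_cubic hp hε0 hεr y hy
      · exact w_eq_cubic hp hε0 hεr _ ⟨le_rfl, by linarith⟩
    have hu := hleft.union hright
    rw [Set.Iic_union_Icc_eq_Iic (by linarith : r - ε ≤ r + ε)] at hu
    have := hu.hasDerivAt (Iic_mem_nhds (by linarith))
    rwa [Dfun, if_pos le_rfl]
  · rcases lt_trichotomy s (r + ε) with h2 | h2 | h2
    · have hev : wfun r p ε =ᶠ[nhds s] fun y =>
          Ac r p ε * (y - (r + ε)) ^ 3 + Bc r p ε * (y - (r + ε)) ^ 2 + r ^ p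
            - Bc r p ε * y ^ 2 := by
        filter_upwards [Ioo_mem_nhds h1 h2] with y hy
        exact w_eq_cubic hp hε0 hεr y ⟨hy.1.le, hy.2.le⟩
      rw [Dfun, if_neg (not_le.mpr h1), if_pos h2.le]
      exact (hasDeriv_cubicpiece s).congr_of_eventuallyEq hev
    · subst h2
      have hd2 : -(2 * Bc r p ε * (r + ε))
          = 3 * Ac r p ε * ((r + ε) - (r + ε)) ^ 2 - 2 * Bc r p ε * (r + ε) := by ring
      have hleft : HasDerivWithinAt (wfun r p ε)
          (-(2 * Bc r p ε * (r + ε))) (Icc (r - ε) (r + ε)) (r + ε) := by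
        rw [hd2]
        refine ((hasDeriv_cubicpiece (r + ε)).hasDerivWithinAt).congr ?_ ?_
        · exact fun y hy => w_eq_cubic hp hε0 hεr y hy
        · exact w_eq_cubic hp hε0 hεr _ ⟨by linarith, le_rfl⟩
      have hright : HasDerivWithinAt (wfun r p ε)
          (-(2 * Bc r p ε * (r + ε))) (Ici (r + ε)) (r + ε) := by
        refine ((hasDeriv_constpiece (r + ε)).hasDerivWithinAt).congr ?_ ?_
        · exact fun y hy => w_eq_const hε0 hεr y hy
        · exact w_eq_const hε0 hεr _ le_rfl
      have hu := hleft.union hright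
      rw [Set.Icc_union_Ici_eq_Ici (by linarith : r - ε ≤ r + ε)] at hu
      have := hu.hasDerivAt (Ici_mem_nhds (by linarith))
      rwa [Dfun, if_neg (by linarith), if_pos le_rfl, ← hd2]
    · have hev : wfun r p ε =ᶠ[nhds s] fun y => r ^ p - Bc r p ε * y ^ 2 := by
        filter_upwards [Ioi_mem_nhds h2] with y hy
        exact w_eq_const hε0 hεr y hy.le
      rw [Dfun, if_neg (by linarith), if_neg (not_le.mpr h2)]
      exact (hasDeriv_constpiece s).congr_of_eventuallyEq hev

lemma D_mono {r p ε : ℝ} (hr : 0 < r) (hp : 1 ≤ p) (hε0 : 0 < ε) (hεr : ε < r) :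
    MonotoneOn (Dfun r p ε) (Ioi 0) := by
  have hB := hBneg hr hp hε0 hεr
  have hA := hAneg hr hp hε0 hεr
  have hP := hPpos hr hp hε0 hεr
  have hP4B := hP4B hr hp hε0 hεr
  have hAid := hAc_id (r := r) (p := p) hε0.ne'
  intro a ha b hb hab
  simp only [mem_Ioi] at ha hb
  have hr1 : ∀ x y : ℝ, 0 ≤ x → x ≤ y → p * x ^ (p - 1) ≤ p * y ^ (p - 1) := by
    intro x y hx hxy
    have := Real.rpow_le_rpow hx hxy (by linarith : (0:ℝ) ≤ p - 1)
    nlinarith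
  unfold Dfun
  split_ifs with h1 h2 h3 h4 h5 h6 h7 h8 h9
  · have := hr1 a b ha.le hab
    nlinarith
  · have h1' := hr1 a (r - ε) ha.le h1
    have hsq : (b - (r + ε)) ^ 2 ≤ (2 * ε) ^ 2 := by nlinarith
    nlinarith [mul_nonpos_of_nonpos_of_nonneg hA (sq_nonneg (b - (r + ε)))]
  · have h1' := hr1 a (r - ε) ha.le h1
    nlinarith
  · exact absurd (hab.trans h5) h1
  · nlinarith [mul_nonneg (sub_nonneg.mpr hab) (by nlinarith : 0 ≤ 2 * (r + ε) - a - b)]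
  · nlinarith [mul_nonpos_of_nonpos_of_nonneg hA (sq_nonneg (a - (r + ε)))]
  · exact absurd (hab.trans h7) h1
  · exact absurd (hab.trans h8) h4
  · nlinarith

lemma D_nonneg {r p ε : ℝ} (hr : 0 < r) (hp : 1 ≤ p) (hε0 : 0 < ε) (hεr : ε < r)
    {s : ℝ} (hs : 0 < s) : 0 ≤ Dfun r p ε s := by
  have hB := hBneg hr hp hε0 hεr
  have hA := hAneg hr hp hε0 hεr
  have hP := hPpos hr hp hε0 hεr
  have hP4B := hP4B hr hp hε0 hεr
  have hAid := hAc_id (r := r) (p := p) hε0.ne'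
  unfold Dfun
  split_ifs with h1 h2
  · have : (0:ℝ) ≤ p * s ^ (p - 1) := by positivity
    nlinarith
  · have hsq : (s - (r + ε)) ^ 2 ≤ (2 * ε) ^ 2 := by nlinarith
    nlinarith
  · nlinarith

lemma w_contOn {r p ε : ℝ} (hr : 0 < r) (hp : 1 ≤ p) (hε0 : 0 < ε) (hεr : ε < r) :
    ContinuousOn (wfun r p ε) (Ici 0) := by
  intro s hs
  rcases eq_or_lt_of_le (mem_Ici.mp hs) with h | h
  · subst h
    have hbase : ContinuousAt (fun y : ℝ => y ^ p - Bc r p ε * y ^ 2) 0 :=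
      (Real.continuousAt_rpow_const 0 p (Or.inr (by linarith))).sub (by fun_prop)
    have hev : wfun r p ε =ᶠ[nhdsWithin 0 (Ici 0)]
        fun y : ℝ => y ^ p - Bc r p ε * y ^ 2 := by
      filter_upwards [nhdsWithin_le_nhds (Iio_mem_nhds (by linarith : (0:ℝ) < r - ε))]
        with y hy
      exact w_eq_pow y (le_of_lt hy)
    exact (hbase.continuousWithinAt).congr_of_eventuallyEq hev (w_eq_pow 0 (by linarith))
  · exact (w_hasDeriv hr hp hε0 hεr h).continuousAt.continuousWithinAt

lemma w_convexOn {r p ε : ℝ} (hr : 0 < r) (hp : 1 ≤ p) (hε0 : 0 < ε) (hεr : ε < r) :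
    ConvexOn ℝ (Ici 0) (wfun r p ε) := by
  apply MonotoneOn.convexOn_of_deriv (convex_Ici 0) (w_contOn hr hp hε0 hεr)
  · rw [interior_Ici]
    exact fun x hx => (w_hasDeriv hr hp hε0 hεr hx).differentiableAt.differentiableWithinAt
  · rw [interior_Ici]
    intro a ha b hb hab
    rw [(w_hasDeriv hr hp hε0 hεr ha).deriv, (w_hasDeriv hr hp hε0 hεr hb).deriv]
    exact D_mono hr hp hε0 hεr ha hb hab

lemma w_monoOn {r p ε : ℝ} (hr : 0 < r) (hp : 1 ≤ p) (hε0 : 0 < ε) (hεr : ε < r) :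
    MonotoneOn (wfun r p ε) (Ici 0) := by
  apply monotoneOn_of_deriv_nonneg (convex_Ici 0) (w_contOn hr hp hε0 hεr)
  · rw [interior_Ici]
    exact fun x hx => (w_hasDeriv hr hp hε0 hεr hx).differentiableAt.differentiableWithinAt
  · rw [interior_Ici]
    intro x hx
    rw [(w_hasDeriv hr hp hε0 hεr hx).deriv]
    exact D_nonneg hr hp hε0 hεr hx

lemma w_abs_convexOn {r p ε : ℝ} (hr : 0 < r) (hp : 1 ≤ p) (hε0 : 0 < ε) (hεr : ε < r) :
    ConvexOn ℝ univ (fun t : ℝ => wfun r p ε |t|) := by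
  have habs : ConvexOn ℝ univ (fun t : ℝ => |t|) := by
    exact (convexOn_univ_norm : ConvexOn ℝ univ (norm : ℝ → ℝ))
  have himg : (fun t : ℝ => |t|) '' univ = Ici 0 := by
    ext x
    simp only [image_univ, mem_range, mem_Ici]
    constructor
    · rintro ⟨y, rfl⟩; exact abs_nonneg y
    · intro hx; exact ⟨x, abs_of_nonneg hx⟩
  exact ConvexOn.comp (f := fun t : ℝ => |t|) (g := wfun r p ε) (s := univ)
    (by rw [himg]; exact w_convexOn hr hp hε0 hεr) habs
    (by rw [himg]; exact w_monoOn hr hp hε0 hεr)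

lemma Wpot_eq_wfun {r p ε : ℝ} (t : ℝ) :
    Wpot r p ε t = wfun r p ε |t| + Bc r p ε * t ^ 2 := by
  simp only [Wpot, wfun, Ac, Bc, sq_abs]
  split_ifs <;> ring

lemma normsq_convex {K : Type*} [NormedAddCommGroup K] [NormedSpace ℝ K] :
    ConvexOn ℝ univ (fun x : K => ‖x‖ ^ 2) := by
  refine ⟨convex_univ, fun x _ y _ a b ha hb hab => ?_⟩
  have h1 : ‖a • x + b • y‖ ≤ a * ‖x‖ + b * ‖y‖ := by
    simpa [smul_eq_mul] using
      (convexOn_univ_norm : ConvexOn ℝ univ (norm : K → ℝ)).2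
        (mem_univ x) (mem_univ y) ha hb hab
  have h2 : (0:ℝ) ≤ a * ‖x‖ + b * ‖y‖ := by positivity
  have h3 : ‖a • x + b • y‖ ^ 2 ≤ (a * ‖x‖ + b * ‖y‖) ^ 2 := by
    nlinarith [norm_nonneg (a • x + b • y)]
  have h4 : (a * ‖x‖ + b * ‖y‖) ^ 2 ≤ a * ‖x‖ ^ 2 + b * ‖y‖ ^ 2 := by
    nlinarith [sq_nonneg (‖x‖ - ‖y‖), mul_nonneg ha hb]
  simpa [smul_eq_mul] using h3.trans h4

lemma comp_lin_convex {m : ℕ} {K : Type*} [NormedAddCommGroup K] [NormedSpace ℝ K]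
    (T : EuclideanSpace ℝ (Fin m) →ₗ[ℝ] K) (g : K) :
    ConvexOn ℝ univ (fun v : EuclideanSpace ℝ (Fin m) => ‖T v - g‖ ^ 2) := by
  have h := (normsq_convex (K := K)).comp_affineMap
    (T.toAffineMap - AffineMap.const ℝ (EuclideanSpace ℝ (Fin m)) g)
  exact h

lemma sum_convex {E' : Type*} [AddCommMonoid E'] [Module ℝ E'] {ι : Type*}
    (s : Finset ι) (F : ι → E' → ℝ) (h : ∀ i, ConvexOn ℝ univ (F i)) :
    ConvexOn ℝ univ (fun v : E' => ∑ i ∈ s, F i v) := by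
  classical
  induction s using Finset.induction with
  | empty => simpa using convexOn_const (0:ℝ) convex_univ
  | insert _ _ hx ih =>
    simp only [Finset.sum_insert hx]
    exact (h _).add ih

end Statement13Aux

open Statement13Aux Set in
/-- If `ω > γ|B|` (with `B` as in the smoothing construction), then
`v ↦ J_{ω,u}(v,q) = ‖Tv − g‖² + γ ∑ᵢ W_r^{p,ε}(vᵢ) + ω‖v − u‖² + ½‖Av − (f+q)‖²`
is `ν`-strongly convex with `ν = 2(ω − γ|B|)`, i.e. subtracting `(ν/2)‖v‖²` leaves a
convex function. -/
theorem statement13 (r p ε : ℝ) (hr : 0 < r) (hp : 1 ≤ p) (hε0 : 0 < ε) (hεr : ε < r)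
    (m : ℕ) {K E₁ : Type*}
    [NormedAddCommGroup K] [InnerProductSpace ℝ K] [FiniteDimensional ℝ K]
    [NormedAddCommGroup E₁] [InnerProductSpace ℝ E₁] [FiniteDimensional ℝ E₁]
    (T : EuclideanSpace ℝ (Fin m) →ₗ[ℝ] K) (A : EuclideanSpace ℝ (Fin m) →ₗ[ℝ] E₁)
    (g : K) (f q : E₁) (u : EuclideanSpace ℝ (Fin m)) (γ ω : ℝ) (hγ : 0 < γ)
    (hω : γ * |p * (r - ε) ^ (p - 1) / (2 * ε) +
        3 * ((r - ε) ^ p - r ^ p) / (4 * ε ^ 2)| < ω) :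
    ConvexOn ℝ Set.univ (fun v : EuclideanSpace ℝ (Fin m) =>
      (‖T v - g‖ ^ 2 + γ * ∑ i, Wpot r p ε (v i) + ω * ‖v - u‖ ^ 2 +
          1 / 2 * ‖A v - (f + q)‖ ^ 2) -
        2 * (ω - γ * |p * (r - ε) ^ (p - 1) / (2 * ε) +
            3 * ((r - ε) ^ p - r ^ p) / (4 * ε ^ 2)|) / 2 * ‖v‖ ^ 2) := by
  have hBdef : p * (r - ε) ^ (p - 1) / (2 * ε) + 3 * ((r - ε) ^ p - r ^ p) / (4 * ε ^ 2)
      = Bc r p ε := rfl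
  have hB := hBneg hr hp hε0 hεr
  have habs : |Bc r p ε| = -Bc r p ε := abs_of_neg hB
  -- the convex pieces
  have c1 : ConvexOn ℝ univ (fun v : EuclideanSpace ℝ (Fin m) => ‖T v - g‖ ^ 2) :=
    comp_lin_convex T g
  have c4 : ConvexOn ℝ univ
      (fun v : EuclideanSpace ℝ (Fin m) => ‖A v - (f + q)‖ ^ 2) :=
    comp_lin_convex A (f + q)
  have c4' := c4.smul (by norm_num : (0:ℝ) ≤ 1 / 2)
  have cWi : ∀ i : Fin m, ConvexOn ℝ univ
      (fun v : EuclideanSpace ℝ (Fin m) => wfun r p ε |v i|) := by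
    intro i
    refine ⟨convex_univ, fun x _ y _ a b ha hb hab => ?_⟩
    have := (w_abs_convexOn hr hp hε0 hεr).2 (mem_univ (x i)) (mem_univ (y i)) ha hb hab
    simpa using this
  have cW : ConvexOn ℝ univ
      (fun v : EuclideanSpace ℝ (Fin m) => ∑ i, wfun r p ε |v i|) :=
    sum_convex _ _ cWi
  have cW' := cW.smul hγ.le
  have c3 : ConvexOn ℝ univ
      (fun v : EuclideanSpace ℝ (Fin m) => ω * ‖u‖ ^ 2 - 2 * ω * inner ℝ v u) := by
    refine ⟨convex_univ, fun x _ y _ a b ha hb hab => le_of_eq ?_⟩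
    simp only [inner_add_left, real_inner_smul_left, smul_eq_mul]
    ring_nf
    linear_combination (ω * ‖u‖ ^ 2) * hab.symm
  have total := ((c1.add cW').add c3).add c4'
  convert total using 1 <;> try rfl
  funext v
  simp only [Pi.add_apply, Pi.smul_apply, smul_eq_mul]
  have hnorm : ‖v‖ ^ 2 = ∑ i, (v i) ^ 2 := by
    rw [EuclideanSpace.norm_eq, Real.sq_sqrt (by positivity)]
    simp [sq_abs]
  have hsub : ‖v - u‖ ^ 2 = ‖v‖ ^ 2 - 2 * inner ℝ v u + ‖u‖ ^ 2 := norm_sub_sq_real v u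
  have hWsum : ∑ i, Wpot r p ε (v i)
      = (∑ i, wfun r p ε |v i|) + Bc r p ε * ∑ i, (v i) ^ 2 := by
    rw [Finset.mul_sum, ← Finset.sum_add_distrib]
    exact Finset.sum_congr rfl fun i _ => Wpot_eq_wfun (v i)
  rw [hBdef, habs, hWsum, hsub, hnorm]
  ring
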